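/- For any positive definite symmetric n×n matrix S with entries S_{ij} < 1 for all i,j, the hyperbolic volume of the region F = {(u,v) ∈ H_{n+1} : u = Σ t_i u_i for some t ∈ Δ_n, v > sqrt(1 - |u|²)} (where u_i·u_j = S_{ij}) with respect to the measure d^n u dv / v^{n+1} equals (1/n) ∫_{Δ_n} (det S)^{1/2}(1 - tᵀSt)^{-n/2} dt. -/

import Mathlib

open Matrix BigOperators MeasureTheory Set

/-- Integral of `1 / v ^ (n+1)` over `(a, ∞)` for `a > 0`. -/
lemma aux_inner_int {n : ℕ} (hn : 0 < n) {a : ℝ} (ha : 0 < a) :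
    ∫ v in Set.Ioi a, 1 / v ^ (n + 1) = 1 / (n * a ^ n) := by
  have hexp : (-(n + 1) : ℝ) < -1 := by
    have : (0 : ℝ) < n := by exact_mod_cast hn
    linarith
  have hcongr : ∀ v ∈ Set.Ioi a, (v : ℝ) ^ (-(n + 1) : ℝ) = 1 / v ^ (n + 1) := by
    intro v hv
    have hv0 : 0 ≤ v := le_of_lt (ha.trans hv)
    rw [Real.rpow_neg hv0]
    rw [show ((n : ℝ) + 1) = ((n + 1 : ℕ) : ℝ) by push_cast; ring, Real.rpow_natCast]
    rw [one_div]
  have h1 := integral_Ioi_rpow_of_lt hexp ha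
  rw [← setIntegral_congr_fun measurableSet_Ioi hcongr, h1]
  have hn' : (n : ℝ) ≠ 0 := Nat.cast_ne_zero.mpr hn.ne'
  have : (-(n + 1) : ℝ) + 1 = -(n : ℝ) := by ring
  rw [this, Real.rpow_neg ha.le, Real.rpow_natCast]
  field_simp

lemma aux_inner_integrable {n : ℕ} (hn : 0 < n) {a : ℝ} (ha : 0 < a) :
    IntegrableOn (fun v : ℝ => 1 / v ^ (n + 1)) (Set.Ioi a) := by
  have hexp : (-(n + 1) : ℝ) < -1 := by
    have : (0 : ℝ) < n := by exact_mod_cast hn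
    linarith
  refine (integrableOn_Ioi_rpow_of_lt hexp ha).congr_fun (fun v hv => ?_) measurableSet_Ioi
  have hv0 : 0 ≤ v := le_of_lt (ha.trans hv)
  beta_reduce
  rw [Real.rpow_neg hv0]
  rw [show ((n : ℝ) + 1) = ((n + 1 : ℕ) : ℝ) by push_cast; ring, Real.rpow_natCast]
  rw [one_div]

/-- for a positive definite symmetric matrix S with entries < 1 and
vectors u₁,…,uₙ with Gram matrix S, the hyperbolic volume of the "skyscraper" region
F over the simplex spanned by 0, u₁, …, uₙ, cut below by the unit hemisphere, with
respect to dⁿu dv / v^{n+1}, equals (1/n) ∫_{Δₙ} √(det S)(1 - tᵀSt)^{-n/2} dt. -/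
theorem stmt10 (n : ℕ) (hn : 0 < n) (S : Matrix (Fin n) (Fin n) ℝ)
    (hsymm : S.IsSymm) (hpd : S.PosDef) (hlt : ∀ i j, S i j < 1)
    (u : Fin n → (Fin n → ℝ)) (hGram : ∀ i j, u i ⬝ᵥ u j = S i j)
    (F : Set ((Fin n → ℝ) × ℝ))
    (hF : F = {p : (Fin n → ℝ) × ℝ |
        ∃ t : Fin n → ℝ, (∀ i, 0 ≤ t i) ∧ ∑ i, t i ≤ 1 ∧
          p.1 = ∑ i, t i • u i ∧ Real.sqrt (1 - p.1 ⬝ᵥ p.1) < p.2}) :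
    (∫ p in F, 1 / p.2 ^ (n + 1)) =
      (1 / (n : ℝ)) * ∫ t in {t : Fin n → ℝ | (∀ i, 0 ≤ t i) ∧ ∑ i, t i ≤ 1},
        Real.sqrt S.det / (1 - ∑ i, ∑ j, t i * S i j * t j) ^ ((n : ℝ) / 2) := by
  classical
  -- the matrix whose columns are the `u i`
  set A : Matrix (Fin n) (Fin n) ℝ := Matrix.of fun k i => u i k with hA
  -- the associated continuous linear map
  set L : (Fin n → ℝ) →L[ℝ] (Fin n → ℝ) :=
    LinearMap.toContinuousLinearMap (Matrix.toLin' A) with hLdef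
  have hLapp : ∀ t : Fin n → ℝ, L t = ∑ i, t i • u i := by
    intro t
    funext k
    simp only [hLdef, LinearMap.coe_toContinuousLinearMap', Matrix.toLin'_apply]
    simp [Matrix.mulVec, dotProduct, hA, Finset.sum_apply, mul_comm]
  -- Gram matrix identity
  have hGram' : Aᵀ * A = S := by
    ext i j
    simpa [Matrix.mul_apply, Matrix.transpose_apply, hA, dotProduct]
      using hGram i j
  have hSdet : 0 < S.det := hpd.det_pos
  have hdet2 : A.det ^ 2 = S.det := by
    rw [← hGram', Matrix.det_mul, Matrix.det_transpose]; ring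
  have hAdet : A.det ≠ 0 := by
    intro h
    rw [h] at hdet2
    simp at hdet2
    linarith
  have habs : |A.det| = Real.sqrt S.det := by
    rw [← hdet2, Real.sqrt_sq_eq_abs]
  -- injectivity
  have hLinj : Function.Injective L := by
    have : Function.Injective (A.mulVec) :=
      Matrix.mulVec_injective_iff_isUnit.2
        (A.isUnit_iff_isUnit_det.2 (isUnit_iff_ne_zero.2 hAdet))
    intro x y hxy
    apply this
    simpa [hLdef, Matrix.toLin'_apply] using hxy
  -- the simplex
  set Δ : Set (Fin n → ℝ) := {t : Fin n → ℝ | (∀ i, 0 ≤ t i) ∧ ∑ i, t i ≤ 1} with hΔ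
  have hΔclosed : IsClosed Δ := by
    have h1 : IsClosed {t : Fin n → ℝ | ∀ i, 0 ≤ t i} := by
      have : {t : Fin n → ℝ | ∀ i, 0 ≤ t i} = ⋂ i, {t : Fin n → ℝ | 0 ≤ t i} := by
        ext t; simp
      rw [this]
      exact isClosed_iInter fun i => isClosed_le continuous_const (continuous_apply i)
    have h2 : IsClosed {t : Fin n → ℝ | ∑ i, t i ≤ 1} :=
      isClosed_le (continuous_finset_sum _ fun i _ => continuous_apply i) continuous_const
    exact (h1.inter h2 : _)
  have hΔcompact : IsCompact Δ := by
    have hsub : Δ ⊆ Set.pi Set.univ (fun _ : Fin n => Set.Icc (0 : ℝ) 1) := by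
      intro t ht
      intro i _
      refine ⟨ht.1 i, ?_⟩
      calc t i ≤ ∑ j, t j := Finset.single_le_sum (fun j _ => ht.1 j) (Finset.mem_univ i)
        _ ≤ 1 := ht.2
    exact (isCompact_univ_pi fun _ => isCompact_Icc).of_isClosed_subset hΔclosed hsub
  have hΔmeas : MeasurableSet Δ := hΔclosed.measurableSet
  set K : Set (Fin n → ℝ) := L '' Δ with hK
  have hKcomp : IsCompact K := hΔcompact.image L.continuous
  have hKmeas : MeasurableSet K := hKcomp.measurableSet
  -- quadratic form
  set q : (Fin n → ℝ) → ℝ := fun t => ∑ i, ∑ j, t i * S i j * t j with hqdef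
  have hdot : ∀ t : Fin n → ℝ, (∑ i, t i • u i) ⬝ᵥ (∑ i, t i • u i) = q t := by
    intro t
    have key : ∀ i j, (∑ k, (t i * u i k) * (t j * u j k)) = t i * S i j * t j := by
      intro i j
      have : (∑ k, (t i * u i k) * (t j * u j k)) = t i * t j * ∑ k, u i k * u j k := by
        rw [Finset.mul_sum]
        exact Finset.sum_congr rfl fun k _ => by ring
      rw [this, show (∑ k, u i k * u j k) = u i ⬝ᵥ u j from rfl, hGram i j]
      ring
    calc (∑ i, t i • u i) ⬝ᵥ (∑ i, t i • u i)
        = ∑ k, (∑ i, t i * u i k) * (∑ j, t j * u j k) := by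
          simp [dotProduct, Finset.sum_apply, Pi.smul_apply, smul_eq_mul]
      _ = ∑ k, ∑ i, ∑ j, (t i * u i k) * (t j * u j k) := by
          exact Finset.sum_congr rfl fun k _ => by rw [Finset.sum_mul_sum]
      _ = ∑ i, ∑ k, ∑ j, (t i * u i k) * (t j * u j k) := Finset.sum_comm
      _ = ∑ i, ∑ j, ∑ k, (t i * u i k) * (t j * u j k) :=
          Finset.sum_congr rfl fun i _ => Finset.sum_comm
      _ = q t := Finset.sum_congr rfl fun i _ => Finset.sum_congr rfl fun j _ => key i j
  -- bound on the quadratic form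
  obtain ⟨⟨i₀, j₀⟩, -, hmax⟩ := Finset.exists_max_image (Finset.univ : Finset (Fin n × Fin n))
    (fun p => S p.1 p.2) ⟨(⟨0, hn⟩, ⟨0, hn⟩), Finset.mem_univ _⟩
  set M : ℝ := S i₀ j₀ with hM
  have hMlt : M < 1 := hlt i₀ j₀
  have hMub : ∀ i j, S i j ≤ M := fun i j => hmax (i, j) (Finset.mem_univ _)
  have hMpos : 0 < M := by
    have hdiag : 0 < S i₀ i₀ := by
      have hx : (Pi.single i₀ (1:ℝ) : Fin n → ℝ) ≠ 0 := by
        intro h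
        have : Pi.single (M := fun _ : Fin n => ℝ) i₀ (1:ℝ) i₀ = 0 := by rw [h]; rfl
        simp at this
      have := hpd.dotProduct_mulVec_pos hx
      simpa [dotProduct, Matrix.mulVec, Pi.single_apply, Finset.sum_ite_eq',
        Finset.mul_sum] using this
    exact hdiag.trans_le (hMub i₀ i₀)
  have hqle : ∀ t ∈ Δ, q t ≤ M := by
    intro t ht
    have hsum0 : 0 ≤ ∑ i, t i := Finset.sum_nonneg fun i _ => ht.1 i
    have step1 : q t ≤ ∑ i, ∑ j, t i * M * t j := by
      refine Finset.sum_le_sum fun i _ => Finset.sum_le_sum fun j _ => ?_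
      have h1 : 0 ≤ t i * t j := mul_nonneg (ht.1 i) (ht.1 j)
      have := mul_le_mul_of_nonneg_left (hMub i j) h1
      nlinarith
    have step2 : (∑ i, ∑ j, t i * M * t j) = M * ((∑ i, t i) * (∑ i, t i)) := by
      rw [Finset.sum_mul_sum, Finset.mul_sum]
      refine Finset.sum_congr rfl fun i _ => ?_
      rw [Finset.mul_sum]
      exact Finset.sum_congr rfl fun j _ => by ring
    have hss : (∑ i, t i) * (∑ i, t i) ≤ 1 := mul_le_one₀ ht.2 hsum0 ht.2
    have step3 : M * ((∑ i, t i) * (∑ i, t i)) ≤ M := by nlinarith [hss, hMpos]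
    linarith
  set c : ℝ := 1 - M with hc
  have hcpos : 0 < c := by simp [hc]; linarith
  -- lower bound for 1 - |x|² on K
  have hKdot : ∀ x ∈ K, ∃ t ∈ Δ, x = ∑ i, t i • u i ∧ x ⬝ᵥ x = q t ∧ q t ≤ M := by
    rintro x ⟨t, htΔ, rfl⟩
    refine ⟨t, htΔ, hLapp t, ?_, hqle t htΔ⟩
    rw [hLapp t, hdot t]
  have hKpos : ∀ x ∈ K, c ≤ 1 - x ⬝ᵥ x := by
    intro x hx
    obtain ⟨t, htΔ, -, hxx, hle⟩ := hKdot x hx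
    rw [hxx]; simp [hc]; linarith
  -- continuity of the dot-square map
  have hcontdot : Continuous fun x : Fin n → ℝ => x ⬝ᵥ x := by
    show Continuous fun x : Fin n → ℝ => ∑ k, x k * x k
    exact continuous_finset_sum _ fun k _ => (continuous_apply k).mul (continuous_apply k)
  -- the function H
  set H : (Fin n → ℝ) → ℝ := fun x => (1 - x ⬝ᵥ x) ^ (-(n : ℝ) / 2) / n with hHdef
  have hHcont : ContinuousOn H K := by
    refine ContinuousOn.div_const ?_ _
    refine ContinuousOn.rpow_const ((continuous_const.sub hcontdot).continuousOn) ?_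
    intro x hx
    exact Or.inl (ne_of_gt (lt_of_lt_of_le hcpos (hKpos x hx)))
  have hHnonneg : ∀ x ∈ K, 0 ≤ H x := by
    intro x hx
    have h1 : (0:ℝ) < 1 - x ⬝ᵥ x := lt_of_lt_of_le hcpos (hKpos x hx)
    have : (0:ℝ) ≤ (1 - x ⬝ᵥ x) ^ (-(n : ℝ) / 2) := Real.rpow_nonneg h1.le _
    simp only [hHdef]
    positivity
  have hHint : IntegrableOn H K := hHcont.integrableOn_compact hKcomp
  -- rewrite F
  have hF' : F = {p : (Fin n → ℝ) × ℝ | p.1 ∈ K ∧ Real.sqrt (1 - p.1 ⬝ᵥ p.1) < p.2} := by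
    rw [hF]
    ext p
    constructor
    · rintro ⟨t, h1, h2, h3, h4⟩
      exact ⟨⟨t, ⟨h1, h2⟩, by rw [hLapp t, h3]⟩, h4⟩
    · rintro ⟨⟨t, htΔ, hteq⟩, h4⟩
      exact ⟨t, htΔ.1, htΔ.2, by rw [← hteq, hLapp t], h4⟩
  have hsqrtcont : Continuous fun p : (Fin n → ℝ) × ℝ => Real.sqrt (1 - p.1 ⬝ᵥ p.1) :=
    Real.continuous_sqrt.comp (continuous_const.sub (hcontdot.comp continuous_fst))
  have hFmeas : MeasurableSet F := by
    rw [hF']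
    exact (measurable_fst hKmeas).inter (measurableSet_lt hsqrtcont.measurable measurable_snd)
  -- measurability of the integrand
  have hfmeas : Measurable fun p : (Fin n → ℝ) × ℝ => 1 / p.2 ^ (n + 1) :=
    measurable_const.div ((measurable_snd).pow_const _)
  -- the positive lower bound gives positivity of sqrt on K
  have hsqrtpos : ∀ x ∈ K, 0 < Real.sqrt (1 - x ⬝ᵥ x) := by
    intro x hx
    exact Real.sqrt_pos.2 (lt_of_lt_of_le hcpos (hKpos x hx))
  -- Step 1: pass to lintegral
  have step1 : (∫ p in F, 1 / p.2 ^ (n + 1)) =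
      (∫⁻ p in F, ENNReal.ofReal (1 / p.2 ^ (n + 1))).toReal := by
    rw [integral_eq_lintegral_of_nonneg_ae]
    · filter_upwards [ae_restrict_mem hFmeas] with p hp
      rw [hF'] at hp
      have h2 : 0 < p.2 := lt_of_le_of_lt (Real.sqrt_nonneg _) hp.2
      positivity
    · exact hfmeas.aestronglyMeasurable.restrict
  -- Step 2: Tonelli
  have step2 : (∫⁻ p in F, ENNReal.ofReal (1 / p.2 ^ (n + 1))) =
      ∫⁻ x, K.indicator (fun x =>
        ∫⁻ v in Set.Ioi (Real.sqrt (1 - x ⬝ᵥ x)), ENNReal.ofReal (1 / v ^ (n + 1))) x := by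
    rw [← lintegral_indicator hFmeas]
    have hmeasind : Measurable (F.indicator
        fun p : (Fin n → ℝ) × ℝ => ENNReal.ofReal (1 / p.2 ^ (n + 1))) :=
      Measurable.indicator (by exact ENNReal.measurable_ofReal.comp hfmeas) hFmeas
    rw [Measure.volume_eq_prod, lintegral_prod _ hmeasind.aemeasurable]
    refine lintegral_congr fun x => ?_
    by_cases hx : x ∈ K
    · have heq : ∀ v : ℝ, F.indicator
          (fun p : (Fin n → ℝ) × ℝ => ENNReal.ofReal (1 / p.2 ^ (n + 1))) (x, v) =
          (Set.Ioi (Real.sqrt (1 - x ⬝ᵥ x))).indicator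
            (fun v => ENNReal.ofReal (1 / v ^ (n + 1))) v := by
        intro v
        rw [hF']
        by_cases hv : Real.sqrt (1 - x ⬝ᵥ x) < v
        · rw [Set.indicator_of_mem (show (x, v) ∈ {p : (Fin n → ℝ) × ℝ |
                p.1 ∈ K ∧ Real.sqrt (1 - p.1 ⬝ᵥ p.1) < p.2} from ⟨hx, hv⟩),
            Set.indicator_of_mem (show v ∈ Set.Ioi (Real.sqrt (1 - x ⬝ᵥ x)) from hv)]
        · rw [Set.indicator_of_notMem (show (x, v) ∉ {p : (Fin n → ℝ) × ℝ |
                p.1 ∈ K ∧ Real.sqrt (1 - p.1 ⬝ᵥ p.1) < p.2} from fun hmem => hv hmem.2),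
            Set.indicator_of_notMem
              (show v ∉ Set.Ioi (Real.sqrt (1 - x ⬝ᵥ x)) from hv)]
      simp only [heq]
      rw [lintegral_indicator measurableSet_Ioi, Set.indicator_of_mem hx]
    · have heq : ∀ v : ℝ, F.indicator
          (fun p : (Fin n → ℝ) × ℝ => ENNReal.ofReal (1 / p.2 ^ (n + 1))) (x, v) = 0 := by
        intro v
        rw [hF']
        exact Set.indicator_of_notMem (by simp [hx]) _
      simp only [heq]
      rw [Set.indicator_of_notMem hx]
      simp
  -- Step 3: compute the inner integral
  have step3 : ∀ x ∈ K,
      (∫⁻ v in Set.Ioi (Real.sqrt (1 - x ⬝ᵥ x)), ENNReal.ofReal (1 / v ^ (n + 1))) =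
      ENNReal.ofReal (H x) := by
    intro x hx
    set a : ℝ := Real.sqrt (1 - x ⬝ᵥ x) with ha
    have hapos : 0 < a := hsqrtpos x hx
    have hbase : (0:ℝ) < 1 - x ⬝ᵥ x := lt_of_lt_of_le hcpos (hKpos x hx)
    rw [← ofReal_integral_eq_lintegral_ofReal (aux_inner_integrable hn hapos)
      ((ae_restrict_mem measurableSet_Ioi).mono fun v hv => by
        have : 0 < v := hapos.trans hv
        positivity)]
    rw [aux_inner_int hn hapos]
    congr 1
    have han : a ^ n = (1 - x ⬝ᵥ x) ^ ((n : ℝ) / 2) := by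
      rw [ha, Real.sqrt_eq_rpow, ← Real.rpow_natCast ((1 - x ⬝ᵥ x) ^ ((1:ℝ)/2)) n,
        ← Real.rpow_mul hbase.le]
      congr 1
      ring
    have hneg : (1 - x ⬝ᵥ x) ^ (-(n : ℝ) / 2) = ((1 - x ⬝ᵥ x) ^ ((n : ℝ) / 2))⁻¹ := by
      rw [show (-(n : ℝ) / 2) = -((n : ℝ) / 2) by ring, Real.rpow_neg hbase.le]
    have hpow_pos : (0:ℝ) < (1 - x ⬝ᵥ x) ^ ((n : ℝ) / 2) := Real.rpow_pos_of_pos hbase _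
    have hn' : (0:ℝ) < n := by exact_mod_cast hn
    rw [hHdef]
    simp only
    rw [hneg, han]
    field_simp
  -- Step 4: back to a Bochner integral over K
  have step4 : (∫⁻ x, K.indicator (fun x =>
      ∫⁻ v in Set.Ioi (Real.sqrt (1 - x ⬝ᵥ x)), ENNReal.ofReal (1 / v ^ (n + 1))) x) =
      ENNReal.ofReal (∫ x in K, H x) := by
    rw [Set.indicator_congr (fun x hx => step3 x hx)]
    rw [lintegral_indicator hKmeas]
    rw [← ofReal_integral_eq_lintegral_ofReal hHint
      ((ae_restrict_mem hKmeas).mono fun x hx => hHnonneg x hx)]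
  -- combine steps 1-4
  have hKint : (∫ p in F, 1 / p.2 ^ (n + 1)) = ∫ x in K, H x := by
    rw [step1, step2, step4, ENNReal.toReal_ofReal
      (setIntegral_nonneg hKmeas fun x hx => hHnonneg x hx)]
  -- Step 5: change of variables
  have hLder : ∀ x ∈ Δ, HasFDerivWithinAt (⇑L) L Δ x := fun x _ =>
    L.hasFDerivAt.hasFDerivWithinAt
  have step5 : (∫ x in K, H x) = ∫ t in Δ, |L.det| • H (L t) := by
    rw [hK]
    exact integral_image_eq_integral_abs_det_fderiv_smul volume hΔmeas
      (fun x hx => hLder x hx) (hLinj.injOn) H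
  have hLdet : |L.det| = Real.sqrt S.det := by
    rw [← habs]
    congr 1
    rw [hLdef]
    show LinearMap.det _ = _
    rw [LinearMap.coe_toContinuousLinearMap, LinearMap.det_toLin']
  -- Step 6: identify with the RHS
  have step6 : (∫ t in Δ, |L.det| • H (L t)) =
      (1 / (n : ℝ)) * ∫ t in Δ, Real.sqrt S.det / (1 - q t) ^ ((n : ℝ) / 2) := by
    rw [← integral_const_mul]
    refine setIntegral_congr_fun hΔmeas fun t ht => ?_
    have hbase : (0:ℝ) < 1 - q t := by
      have := hqle t ht; simp only [hc] at hcpos; linarith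
    have hLt : L t ⬝ᵥ L t = q t := by rw [hLapp t, hdot t]
    have hneg : (1 - q t) ^ (-(n : ℝ) / 2) = ((1 - q t) ^ ((n : ℝ) / 2))⁻¹ := by
      rw [show (-(n : ℝ) / 2) = -((n : ℝ) / 2) by ring, Real.rpow_neg hbase.le]
    rw [hLdet, smul_eq_mul, hHdef]
    simp only [hLt]
    rw [hneg]
    have hn' : (0:ℝ) < n := by exact_mod_cast hn
    ring
  rw [hKint, step5, step6]
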